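/- Let (L, [,], ∘) be a post-Lie algebra over a field k. On the vector space L × L define the bilinear operation ⟦(a,b),(c,d)⟧ := (a∘c − c∘a + [a,c], a∘d − c∘b + [b,d]). Then ⟦,⟧ is a Lie bracket on L × L, i.e., it is antisymmetric and satisfies the Jacobi identity. -/
import Mathlib

private lemma sk' {L : Type*} [LieRing L] (x y : L) : ⁅x, y⁆ + ⁅y, x⁆ = 0 := by
  rw [← lie_skew x y]; abel

private lemma jc' {L : Type*} [LieRing L] (x y z : L) :
    ⁅⁅x, y⁆, z⁆ + ⁅⁅y, z⁆, x⁆ + ⁅⁅z, x⁆, y⁆ = 0 := by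
  linear_combination (norm := abel1) sk' ⁅x, y⁆ z + sk' ⁅y, z⁆ x + sk' ⁅z, x⁆ y
    - lie_jacobi z x y

/-- For a post-Lie algebra `(L, [,], ∘)`, the bracket
`⟦(a,b),(c,d)⟧ := (a∘c − c∘a + [a,c], a∘d − c∘b + [b,d])` on `L × L` is a Lie bracket:
it is antisymmetric and satisfies the Jacobi identity. -/
theorem postlie_hat_bracket_is_lie (k L : Type*) [Field k] [LieRing L] [LieAlgebra k L]
    (o : L →ₗ[k] L →ₗ[k] L)
    (h1 : ∀ x y z : L,
      o (o x y) z - o x (o y z) - o (o y x) z + o y (o x z) = o ⁅y, x⁆ z)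
    (h2 : ∀ x y z : L, o x ⁅y, z⁆ = ⁅o x y, z⁆ + ⁅y, o x z⁆) :
    ∀ B : L × L → L × L → L × L,
      (B = fun u v => (o u.1 v.1 - o v.1 u.1 + ⁅u.1, v.1⁆,
                       o u.1 v.2 - o v.1 u.2 + ⁅u.2, v.2⁆)) →
      (∀ u v : L × L, B u v = - B v u) ∧
      (∀ u v w : L × L, B (B u v) w + B (B v w) u + B (B w u) v = 0) := by
  intro B hB
  subst hB
  constructor
  · rintro ⟨a, b⟩ ⟨c, d⟩
    refine Prod.ext ?_ ?_ <;> simp only [Prod.fst, Prod.snd, Prod.neg_mk] <;>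
      rw [← lie_skew] <;> abel
  · rintro ⟨a, b⟩ ⟨c, d⟩ ⟨e, f⟩
    refine Prod.ext ?_ ?_ <;>
      simp only [Prod.fst, Prod.snd, Prod.mk_add_mk, Prod.fst_add, Prod.snd_add,
        map_add, map_sub, LinearMap.add_apply, LinearMap.sub_apply,
        add_lie, sub_lie, lie_add, lie_sub, Prod.fst_zero, Prod.snd_zero]
    · linear_combination (norm := module)
        - h2 a c e - h1 a e c - h1 c a e - h2 c e a - h2 e a c - h1 e c a
        - sk' (o a e) c - sk' (o c a) e - sk' (o e c) a + jc' a c e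
    · linear_combination (norm := module)
        - h1 a e d - h1 c a f - h1 e c b
        - h2 a d f - h2 c f b - h2 e b d
        - sk' (o a f) d - sk' (o c b) f - sk' (o e d) b + jc' b d f
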